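/- For every finite, simple, connected, undirected graph G with cop number c(G) = 1, the value of the single-cop concurrent game is finite from every initial position: for every (x,y) ∈ V², v̂_{(x,y)} = inf_{π_C} sup_{π_R} v_{(x,y)}(π_C, π_R) < ∞. -/

import Mathlib

open Finset Filter

noncomputable section

variable {V : Type*} [Fintype V] [DecidableEq V]

/-- The closed neighborhood `N[u]` of a vertex `u`: `u` together with its neighbors. -/
def nbhd (G : SimpleGraph V) [DecidableRel G.Adj] (u : V) : Finset V :=
  insert u (G.neighborFinset u)

lemma nbhd_nonempty (G : SimpleGraph V) [DecidableRel G.Adj] (u : V) :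
    (nbhd G u).Nonempty :=
  ⟨u, Finset.mem_insert_self u _⟩

/-! ### The turn-based cops and robber game (TBCR) with `K` cops -/

/-- A position of the `K`-cop game: the cops' locations and the robber's location. -/
abbrev PosK (V : Type*) (K : ℕ) := (Fin K → V) × V

/-- A (deterministic, history-dependent) cop strategy for TBCR: an initial placement
of the `K` cops, and a move function from histories of completed rounds. -/
abbrev TBCop (V : Type*) (K : ℕ) := (Fin K → V) × (List (PosK V K) → Fin K → V)

/-- A (deterministic, history-dependent) robber strategy for TBCR: an initial placement
(seeing the cops' placement), and a move function from histories of completed rounds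
together with the cops' fresh move (the cop player moves first in each round). -/
abbrev TBRob (V : Type*) (K : ℕ) := ((Fin K → V) → V) × (List (PosK V K) → (Fin K → V) → V)

/-- The history of completed rounds of TBCR after round `t`; each token must move within its
closed neighborhood (attempted illegal moves leave the token in place). -/
def tbPlay (G : SimpleGraph V) [DecidableRel G.Adj] {K : ℕ}
    (sc : TBCop V K) (sr : TBRob V K) : ℕ → List (PosK V K)
  | 0 => [(sc.1, sr.1 sc.1)]
  | (t+1) =>
    let h := tbPlay G sc sr t
    let p := h.getLast?.getD (sc.1, sr.1 sc.1)
    let c' : Fin K → V := fun i => if sc.2 h i ∈ nbhd G (p.1 i) then sc.2 h i else p.1 i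
    let w := sr.2 h c'
    h ++ [(c', if w ∈ nbhd G p.2 then w else p.2)]

/-- The position of the TBCR game at the end of round `t`. -/
def tbPos (G : SimpleGraph V) [DecidableRel G.Adj] {K : ℕ}
    (sc : TBCop V K) (sr : TBRob V K) (t : ℕ) : PosK V K :=
  (tbPlay G sc sr t).getLast?.getD (sc.1, sr.1 sc.1)

/-- The robber is captured in TBCR: at some time a cop occupies the robber's current
vertex (either at the end of a round, or just after the cops' half of a round). -/
def tbCaptured (G : SimpleGraph V) [DecidableRel G.Adj] {K : ℕ}
    (sc : TBCop V K) (sr : TBRob V K) : Prop :=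
  ∃ t : ℕ, ∃ i : Fin K,
    (tbPos G sc sr t).1 i = (tbPos G sc sr t).2 ∨
    (tbPos G sc sr (t+1)).1 i = (tbPos G sc sr t).2

/-- `K` cops suffice in the turn-based game: the cop player has a strategy guaranteeing
capture against every robber strategy. -/
def tbCopWin (G : SimpleGraph V) [DecidableRel G.Adj] (K : ℕ) : Prop :=
  ∃ sc : TBCop V K, ∀ sr : TBRob V K, tbCaptured G sc sr

/-- The cop number `c(G)`: the minimum `K` for which the cop player wins TBCR. -/
def copNumber (G : SimpleGraph V) [DecidableRel G.Adj] : ℕ :=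
  sInf {K | tbCopWin G K}

/-! ### The single-cop concurrent game, with the expected-capture-time payoff -/

/-- A randomized strategy in the single-cop concurrent game: to each finite history of
positions (cop location, robber location) it assigns a distribution over next moves. -/
abbrev Strat (V : Type*) := List (V × V) → PMF V

/-- A strategy is memoryless if the distribution it assigns depends only on the
current (most recent) position. -/
def Memoryless (π : Strat V) : Prop :=
  ∀ h₁ h₂ : List (V × V), h₁.getLast? = h₂.getLast? → π h₁ = π h₂

/-- The single-cop CCCR transition function: simultaneous moves within closed
neighborhoods (illegal moves ignored), capture positions are absorbing, and a swap of
adjacent vertices is an \"en passant\" capture. -/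
def step1 (G : SimpleGraph V) [DecidableRel G.Adj] (p : V × V) (u w : V) : V × V :=
  if p.1 = p.2 then p
  else
    let u' := if u ∈ nbhd G p.1 then u else p.1
    let w' := if w ∈ nbhd G p.2 then w else p.2
    if u' = p.2 ∧ w' = p.1 then (u', u') else (u', w')

/-- The distribution over histories of the first `t+1` positions, induced by the
strategies `πC, πR` and the initial position `init`. -/
def play1 (G : SimpleGraph V) [DecidableRel G.Adj]
    (πC πR : Strat V) (init : V × V) : ℕ → PMF (List (V × V))
  | 0 => PMF.pure [init]
  | (t+1) => (play1 G πC πR init t).bind fun h =>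
      (πC h).bind fun u => (πR h).bind fun w =>
        PMF.pure (h ++ [step1 G (h.getLast?.getD init) u w])

/-- The probability that cop and robber occupy different vertices at time `t`
(capture is absorbing, so this is the probability that the robber is still free). -/
def freeProb1 (G : SimpleGraph V) [DecidableRel G.Adj]
    (πC πR : Strat V) (init : V × V) (t : ℕ) : ENNReal :=
  (play1 G πC πR init t).toOuterMeasure
    {h | (h.getLast?.getD init).1 ≠ (h.getLast?.getD init).2}

/-- The payoff: the expected number of rounds `t ≥ 0` at which cop and robber occupy
different vertices, i.e. the expected capture time. -/
def payoff (G : SimpleGraph V) [DecidableRel G.Adj]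
    (πC πR : Strat V) (init : V × V) : ENNReal :=
  ∑' t : ℕ, freeProb1 G πC πR init t

/-- The (upper) value of the game started at `init`; the cop minimizes and the robber
maximizes the expected capture time. -/
def gameValue (G : SimpleGraph V) [DecidableRel G.Adj] (init : V × V) : ENNReal :=
  ⨅ πC : Strat V, ⨆ πR : Strat V, payoff G πC πR init


/-! ### Auxiliary development: the Nowakowski–Winkler catch relation -/

lemma CR_self_mem_nbhd (G : SimpleGraph V) [DecidableRel G.Adj] (x : V) : x ∈ nbhd G x :=
  Finset.mem_insert_self _ _

lemma CR_mem_nbhd_of_adj {G : SimpleGraph V} [DecidableRel G.Adj] {x b : V} (h : G.Adj x b) :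
    b ∈ nbhd G x :=
  Finset.mem_insert_of_mem ((SimpleGraph.mem_neighborFinset G x b).2 h)

/-- `CatchN G k x y`: with the cop at `x` and the robber at `y` and the robber moving
first in each round, the cop (moving second, and capturing by co-location) can guarantee
co-location within `k` rounds. -/
def CatchN (G : SimpleGraph V) [DecidableRel G.Adj] : ℕ → V → V → Prop
  | 0, x, y => x = y
  | (k+1), x, y => x = y ∨ ∀ w ∈ nbhd G y, ∃ u ∈ nbhd G x, CatchN G k u w

lemma CatchN_zero_iff {G : SimpleGraph V} [DecidableRel G.Adj] {x y : V} :
    CatchN G 0 x y ↔ x = y := Iff.rfl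

lemma CatchN_succ_iff {G : SimpleGraph V} [DecidableRel G.Adj] {k : ℕ} {x y : V} :
    CatchN G (k+1) x y ↔ x = y ∨ ∀ w ∈ nbhd G y, ∃ u ∈ nbhd G x, CatchN G k u w := Iff.rfl

lemma CatchN_refl (G : SimpleGraph V) [DecidableRel G.Adj] (k : ℕ) (x : V) :
    CatchN G k x x := by
  cases k with
  | zero => rfl
  | succ k => exact Or.inl rfl

lemma CatchN.succ {G : SimpleGraph V} [DecidableRel G.Adj] {k : ℕ} {x y : V}
    (h : CatchN G k x y) : CatchN G (k+1) x y := by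
  induction k generalizing x y with
  | zero => exact Or.inl h
  | succ k ih =>
    rcases h with h | h
    · exact Or.inl h
    · exact Or.inr fun w hw => by
        obtain ⟨u, hu, hc⟩ := h w hw
        exact ⟨u, hu, ih hc⟩

lemma CatchN.mono {G : SimpleGraph V} [DecidableRel G.Adj] {k m : ℕ} {x y : V}
    (hkm : k ≤ m) (h : CatchN G k x y) : CatchN G m x y := by
  induction hkm with
  | refl => exact h
  | step _ ih => exact ih.succ

open Classical in
noncomputable def catchSet (G : SimpleGraph V) [DecidableRel G.Adj] (k : ℕ) :
    Finset (V × V) :=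
  Finset.univ.filter (fun p => CatchN G k p.1 p.2)

lemma mem_catchSet {G : SimpleGraph V} [DecidableRel G.Adj] {k : ℕ} {x y : V} :
    (x, y) ∈ catchSet G k ↔ CatchN G k x y := by
  classical
  simp [catchSet]

lemma catchSet_mono (G : SimpleGraph V) [DecidableRel G.Adj] (k : ℕ) :
    catchSet G k ⊆ catchSet G (k+1) := by
  intro p hp
  obtain ⟨x, y⟩ := p
  exact mem_catchSet.2 (mem_catchSet.1 hp).succ

lemma catchSet_propagate {G : SimpleGraph V} [DecidableRel G.Adj] {k : ℕ}
    (hk : catchSet G k = catchSet G (k+1)) :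
    catchSet G (k+1) = catchSet G (k+2) := by
  refine le_antisymm (catchSet_mono G (k+1)) ?_
  intro p hp
  obtain ⟨x, y⟩ := p
  have h2 : CatchN G (k+2) x y := mem_catchSet.1 hp
  refine mem_catchSet.2 ?_
  rcases h2 with h2 | h2
  · exact Or.inl h2
  · refine Or.inr fun w hw => ?_
    obtain ⟨u, hu, hc⟩ := h2 w hw
    have : (u, w) ∈ catchSet G k := by rw [hk]; exact mem_catchSet.2 hc
    exact ⟨u, hu, mem_catchSet.1 this⟩

/-- Stabilization bound for the catch relation. -/
lemma CatchN_fix (G : SimpleGraph V) [DecidableRel G.Adj] {x y : V}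
    (h : CatchN G (Fintype.card (V × V) + 1) x y) :
    CatchN G (Fintype.card (V × V)) x y := by
  classical
  set N := Fintype.card (V × V) with hN
  have hstab : ∃ j ≤ N, catchSet G j = catchSet G (j+1) := by
    by_contra hno
    push_neg at hno
    have grow : ∀ j, j ≤ N + 1 → j ≤ (catchSet G j).card := by
      intro j
      induction j with
      | zero => intro _; exact Nat.zero_le _
      | succ j ih =>
        intro hj
        have h1 := ih (by omega)
        have hss : catchSet G j ⊂ catchSet G (j+1) :=
          (Finset.ssubset_iff_of_subset (catchSet_mono G j)).2 (by
            by_contra hcon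
            push_neg at hcon
            exact hno j (by omega) (le_antisymm (catchSet_mono G j)
              (fun p hp => by
                by_contra hnp
                exact hnp (hcon p hp))))
        have := Finset.card_lt_card hss
        omega
    have h2 := grow (N + 1) le_rfl
    have h3 : (catchSet G (N + 1)).card ≤ N := by
      have := Finset.card_le_univ (catchSet G (N+1))
      simpa [hN, Finset.card_univ] using this
    omega
  obtain ⟨j, hj, he⟩ := hstab
  have step : ∀ m, catchSet G (j + m) = catchSet G (j + m + 1) := by
    intro m
    induction m with
    | zero => exact he
    | succ m ih => exact catchSet_propagate ih
  have key : catchSet G N = catchSet G (N + 1) := by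
    have := step (N - j)
    rwa [show j + (N - j) = N from by omega] at this
  have : (x, y) ∈ catchSet G (N + 1) := mem_catchSet.2 h
  rw [← key] at this
  exact mem_catchSet.1 this

/-! ### Turn-based game: basic lemmas -/

lemma tbPlay_ne_nil (G : SimpleGraph V) [DecidableRel G.Adj]
    (sc : TBCop V 1) (sr : TBRob V 1) (t : ℕ) : tbPlay G sc sr t ≠ [] := by
  cases t <;> simp [tbPlay]

lemma tbPlay_getLast (G : SimpleGraph V) [DecidableRel G.Adj]
    (sc : TBCop V 1) (sr : TBRob V 1) (t : ℕ) :
    (tbPlay G sc sr t).getLast? = some (tbPos G sc sr t) := by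
  have h := tbPlay_ne_nil G sc sr t
  rw [tbPos]
  cases e : (tbPlay G sc sr t).getLast? with
  | none => exact absurd (List.getLast?_eq_none_iff.1 e) h
  | some q => simp

lemma tbPos_zero (G : SimpleGraph V) [DecidableRel G.Adj]
    (sc : TBCop V 1) (sr : TBRob V 1) : tbPos G sc sr 0 = (sc.1, sr.1 sc.1) := by
  simp [tbPos, tbPlay]

/-- The cop's (clamped) move in round `t+1`. -/
def copNext (G : SimpleGraph V) [DecidableRel G.Adj]
    (sc : TBCop V 1) (sr : TBRob V 1) (t : ℕ) : Fin 1 → V :=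
  fun i => if sc.2 (tbPlay G sc sr t) i ∈ nbhd G ((tbPos G sc sr t).1 i)
    then sc.2 (tbPlay G sc sr t) i else (tbPos G sc sr t).1 i

/-- The robber's (clamped) move in round `t+1`. -/
def robNext (G : SimpleGraph V) [DecidableRel G.Adj]
    (sc : TBCop V 1) (sr : TBRob V 1) (t : ℕ) : V :=
  if sr.2 (tbPlay G sc sr t) (copNext G sc sr t) ∈ nbhd G ((tbPos G sc sr t).2)
    then sr.2 (tbPlay G sc sr t) (copNext G sc sr t) else (tbPos G sc sr t).2

lemma tbPos_succ (G : SimpleGraph V) [DecidableRel G.Adj]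
    (sc : TBCop V 1) (sr : TBRob V 1) (t : ℕ) :
    tbPos G sc sr (t+1) = (copNext G sc sr t, robNext G sc sr t) := by
  rw [tbPos]
  show ((tbPlay G sc sr t ++ [_]).getLast?).getD _ = _
  rw [List.getLast?_concat]
  rfl

lemma copNext_mem (G : SimpleGraph V) [DecidableRel G.Adj]
    (sc : TBCop V 1) (sr : TBRob V 1) (t : ℕ) (i : Fin 1) :
    copNext G sc sr t i ∈ nbhd G ((tbPos G sc sr t).1 i) := by
  rw [copNext]
  split
  · assumption
  · exact CR_self_mem_nbhd G _

/-! ### The surviving robber, when the catch relation is not full -/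

open Classical in
/-- The robber's escape move. -/
noncomputable def escMove (G : SimpleGraph V) [DecidableRel G.Adj] (u y : V) : V :=
  if h : ∃ w ∈ nbhd G y, ∀ u' ∈ nbhd G u, ¬ CatchN G (Fintype.card (V × V)) u' w
  then h.choose else y

open Classical in
lemma escMove_spec {G : SimpleGraph V} [DecidableRel G.Adj] {u y : V}
    (h : ∃ w ∈ nbhd G y, ∀ u' ∈ nbhd G u, ¬ CatchN G (Fintype.card (V × V)) u' w) :
    escMove G u y ∈ nbhd G y ∧
      ∀ u' ∈ nbhd G u, ¬ CatchN G (Fintype.card (V × V)) u' (escMove G u y) := by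
  rw [escMove, dif_pos h]
  exact ⟨h.choose_spec.1, h.choose_spec.2⟩

open Classical in
/-- The robber's initial placement. -/
noncomputable def placeMove (G : SimpleGraph V) [DecidableRel G.Adj] (x : V) : V :=
  if h : ∃ y, ∀ u ∈ nbhd G x, ¬ CatchN G (Fintype.card (V × V)) u y
  then h.choose else x

open Classical in
lemma placeMove_spec {G : SimpleGraph V} [DecidableRel G.Adj] {x : V}
    (h : ∃ y, ∀ u ∈ nbhd G x, ¬ CatchN G (Fintype.card (V × V)) u y) :
    ∀ u ∈ nbhd G x, ¬ CatchN G (Fintype.card (V × V)) u (placeMove G x) := by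
  rw [placeMove, dif_pos h]
  exact h.choose_spec

/-- The surviving robber strategy. -/
noncomputable def survRob (G : SimpleGraph V) [DecidableRel G.Adj] : TBRob V 1 :=
  (fun c0 => placeMove G (c0 0),
   fun h c' => escMove G (c' 0) ((h.getLast?.getD (c', c' 0)).2))

/-- Main structural result: if `G` is connected with cop number one, the catch relation is
full at some positive level. -/
lemma exists_catch_bound (G : SimpleGraph V) [DecidableRel G.Adj]
    (hconn : G.Connected) (h : copNumber G = 1) :
    ∃ T : ℕ, 0 < T ∧ ∀ x y : V, CatchN G T x y := by
  classical
  set N := Fintype.card (V × V) with hN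
  have hwin : tbCopWin G 1 := by
    have hne : {K | tbCopWin G K}.Nonempty := by
      by_contra hemp
      rw [Set.not_nonempty_iff_eq_empty] at hemp
      rw [copNumber, hemp, Nat.sInf_empty] at h
      exact absurd h (by norm_num)
    have hmem := Nat.sInf_mem hne
    rw [copNumber] at h
    rw [h] at hmem
    exact hmem
  obtain ⟨sc, hsc⟩ := hwin
  set x0 := sc.1 0 with hx0
  haveI : Nonempty V := ⟨x0⟩
  have hall : ∀ y, CatchN G N x0 y := by
    by_contra hnot
    push_neg at hnot
    obtain ⟨y1, hy1⟩ := hnot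
    have hns : ∃ y, ∀ u ∈ nbhd G x0, ¬ CatchN G N u y := by
      by_contra hns'
      push_neg at hns'
      exact hy1 (CatchN_fix G (Or.inr fun w _ => hns' w))
    set sr : TBRob V 1 := survRob G with hsr
    have hplace : sr.1 sc.1 = placeMove G x0 := rfl
    have hInv : ∀ t, ∀ u ∈ nbhd G ((tbPos G sc sr t).1 0),
        ¬ CatchN G N u ((tbPos G sc sr t).2) := by
      intro t
      induction t with
      | zero =>
        rw [tbPos_zero]
        exact placeMove_spec hns
      | succ t ih =>
        rw [tbPos_succ]
        have hc'mem : copNext G sc sr t 0 ∈ nbhd G ((tbPos G sc sr t).1 0) :=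
          copNext_mem G sc sr t 0
        have hnc : ¬ CatchN G N (copNext G sc sr t 0) ((tbPos G sc sr t).2) :=
          ih _ hc'mem
        have hesc : ∃ w ∈ nbhd G ((tbPos G sc sr t).2),
            ∀ u' ∈ nbhd G (copNext G sc sr t 0), ¬ CatchN G N u' w := by
          by_contra hcon
          push_neg at hcon
          exact hnc (CatchN_fix G (Or.inr hcon))
        have hmove : sr.2 (tbPlay G sc sr t) (copNext G sc sr t)
            = escMove G (copNext G sc sr t 0) ((tbPos G sc sr t).2) := by
          show escMove G _ _ = _
          rw [tbPlay_getLast]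
          rfl
        obtain ⟨hmem, hprop⟩ := escMove_spec hesc
        have hrn : robNext G sc sr t
            = escMove G (copNext G sc sr t 0) ((tbPos G sc sr t).2) := by
          rw [robNext, hmove, if_pos hmem]
        rw [hrn]
        exact hprop
    obtain ⟨t, i, hcap⟩ := hsc sr
    have hi : i = 0 := Subsingleton.elim i 0
    subst hi
    rcases hcap with hcap | hcap
    · exact hInv t _ (CR_self_mem_nbhd G _) (hcap ▸ CatchN_refl G N _)
    · have hmem : (tbPos G sc sr (t+1)).1 0 ∈ nbhd G ((tbPos G sc sr t).1 0) := by
        rw [tbPos_succ]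
        exact copNext_mem G sc sr t 0
      exact hInv t _ hmem (hcap ▸ CatchN_refl G N _)
  -- extend to all starting positions via connectivity
  have hx : ∀ (x z : V) (wlk : G.Walk x z), (∀ y, CatchN G N z y) →
      ∀ y, CatchN G (N + wlk.length) x y := by
    intro x z wlk
    induction wlk with
    | nil => intro hz; simpa using hz
    | @cons a b c hadj p ih =>
      intro hz y
      rw [SimpleGraph.Walk.length_cons]
      refine (CatchN_succ_iff (k := N + p.length)).2 (Or.inr fun w _ => ?_)
      exact ⟨b, CR_mem_nbhd_of_adj hadj, ih hz w⟩
  refine ⟨N + Finset.univ.sup (fun x : V => ((hconn.preconnected x x0).some.length)) + 1,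
    Nat.succ_pos _, fun x y => ?_⟩
  have h1 := hx x x0 (hconn.preconnected x x0).some hall y
  exact h1.mono (by
    have h2 : ((hconn.preconnected x x0).some.length) ≤
        Finset.univ.sup (fun x : V => ((hconn.preconnected x x0).some.length)) :=
      Finset.le_sup (f := fun x : V => ((hconn.preconnected x x0).some.length))
        (Finset.mem_univ x)
    omega)

/-! ### Expectation toolbox for PMFs -/

/-- Expectation of a nonnegative function under a PMF. -/
noncomputable def Ex {α : Type*} (p : PMF α) (g : α → ENNReal) : ENNReal :=
  ∑' a, p a * g a

lemma Ex_pure {α : Type*} (a : α) (g : α → ENNReal) : Ex (PMF.pure a) g = g a := by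
  rw [Ex, tsum_eq_single a]
  · simp [PMF.pure_apply]
  · intro b hb
    simp [PMF.pure_apply, hb]

lemma Ex_bind {α β : Type*} (p : PMF α) (q : α → PMF β) (g : β → ENNReal) :
    Ex (p.bind q) g = Ex p (fun a => Ex (q a) g) := by
  simp only [Ex, PMF.bind_apply]
  calc ∑' b, (∑' a, p a * (q a) b) * g b
      = ∑' b, ∑' a, p a * (q a) b * g b :=
        tsum_congr fun b => ENNReal.tsum_mul_right.symm
    _ = ∑' a, ∑' b, p a * (q a) b * g b := ENNReal.tsum_comm
    _ = ∑' a, p a * ∑' b, (q a) b * g b := tsum_congr fun a => by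
        rw [← ENNReal.tsum_mul_left]
        exact tsum_congr fun b => by ring

lemma Ex_map {α β : Type*} (p : PMF α) (f : α → β) (g : β → ENNReal) :
    Ex (p.map f) g = Ex p (fun a => g (f a)) := by
  rw [PMF.map, Ex_bind]
  simp only [Function.comp_apply, Ex_pure]

lemma Ex_mono {α : Type*} (p : PMF α) {g g' : α → ENNReal} (h : ∀ a, g a ≤ g' a) :
    Ex p g ≤ Ex p g' :=
  Summable.tsum_le_tsum (fun a => mul_le_mul_right (h a) _) ENNReal.summable ENNReal.summable

lemma Ex_mono_support {α : Type*} (p : PMF α) {g g' : α → ENNReal}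
    (h : ∀ a, p a ≠ 0 → g a ≤ g' a) : Ex p g ≤ Ex p g' := by
  refine Summable.tsum_le_tsum (fun a => ?_) ENNReal.summable ENNReal.summable
  by_cases hp : p a = 0
  · simp [hp]
  · exact mul_le_mul_right (h a hp) _

lemma Ex_const {α : Type*} (p : PMF α) (C : ENNReal) : Ex p (fun _ => C) = C := by
  rw [Ex, ENNReal.tsum_mul_right, PMF.tsum_coe, one_mul]

lemma Ex_le {α : Type*} (p : PMF α) {g : α → ENNReal} {C : ENNReal}
    (h : ∀ a, g a ≤ C) : Ex p g ≤ C :=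
  (Ex_mono p h).trans_eq (Ex_const p C)

lemma Ex_swap {α β : Type*} (p : PMF α) (r : PMF β) (f : α → β → ENNReal) :
    Ex p (fun a => Ex r (fun b => f a b)) = Ex r (fun b => Ex p (fun a => f a b)) := by
  simp only [Ex]
  calc ∑' a, p a * ∑' b, r b * f a b
      = ∑' a, ∑' b, p a * (r b * f a b) := tsum_congr fun a => ENNReal.tsum_mul_left.symm
    _ = ∑' b, ∑' a, p a * (r b * f a b) := ENNReal.tsum_comm
    _ = ∑' b, r b * ∑' a, p a * f a b := tsum_congr fun b => by
        rw [← ENNReal.tsum_mul_left]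
        exact tsum_congr fun a => by ring

lemma Ex_mul_left {α : Type*} (p : PMF α) (c : ENNReal) (g : α → ENNReal) :
    Ex p (fun a => c * g a) = c * Ex p g := by
  simp only [Ex]
  rw [← ENNReal.tsum_mul_left]
  exact tsum_congr fun a => by ring

lemma le_tsub_of_add_le_right' {a b c : ENNReal} (hb : b ≠ ⊤) (h : a + b ≤ c) : a ≤ c - b :=
  ENNReal.le_sub_of_add_le_right hb h

lemma Ex_uniform_eq {s : Finset V} (hs : s.Nonempty) (g : V → ENNReal) :
    Ex (PMF.uniformOfFinset s hs) g = ∑ a ∈ s, ((s.card : ENNReal))⁻¹ * g a := by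
  rw [Ex, tsum_fintype]
  simp only [PMF.uniformOfFinset_apply, ite_mul, zero_mul]
  rw [Finset.sum_ite_mem, Finset.univ_inter]

lemma Ex_uniform_le {s : Finset V} (hs : s.Nonempty) (g : V → ENNReal)
    (hg : ∀ a, g a ≤ 1) {a₀ : V} (ha₀ : a₀ ∈ s) {B : ENNReal} (hB : g a₀ ≤ B) :
    Ex (PMF.uniformOfFinset s hs) g ≤
      (1 - ((s.card : ENNReal))⁻¹) + ((s.card : ENNReal))⁻¹ * B := by
  have hcard0 : ((s.card : ENNReal)) ≠ 0 := by
    simp [Finset.card_eq_zero, hs.ne_empty]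
  have hcardT : ((s.card : ENNReal)) ≠ ⊤ := ENNReal.natCast_ne_top _
  rw [Ex_uniform_eq hs g, ← Finset.add_sum_erase s _ ha₀, add_comm]
  refine add_le_add ?_ (mul_le_mul_right hB _)
  calc ∑ a ∈ s.erase a₀, ((s.card : ENNReal))⁻¹ * g a
      ≤ ∑ _a ∈ s.erase a₀, ((s.card : ENNReal))⁻¹ :=
        Finset.sum_le_sum fun a _ => by
          calc ((s.card : ENNReal))⁻¹ * g a ≤ ((s.card : ENNReal))⁻¹ * 1 :=
                mul_le_mul_right (hg a) _
            _ = ((s.card : ENNReal))⁻¹ := mul_one _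
    _ = ((s.erase a₀).card : ℕ) • ((s.card : ENNReal))⁻¹ := (Finset.sum_const _)
    _ = (((s.card - 1 : ℕ)) : ENNReal) * ((s.card : ENNReal))⁻¹ := by
        rw [Finset.card_erase_of_mem ha₀, nsmul_eq_mul]
    _ ≤ 1 - ((s.card : ENNReal))⁻¹ := by
        refine le_tsub_of_add_le_right' (ENNReal.inv_ne_top.2 hcard0) ?_
        have hone : (((s.card - 1 : ℕ)) : ENNReal) + 1 = (s.card : ENNReal) := by
          have hpos : 1 ≤ s.card := hs.card_pos
          exact_mod_cast congrArg (Nat.cast : ℕ → ENNReal) (Nat.sub_add_cancel hpos)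
        calc (((s.card - 1 : ℕ)) : ENNReal) * ((s.card : ENNReal))⁻¹ + ((s.card : ENNReal))⁻¹
            = ((((s.card - 1 : ℕ)) : ENNReal) + 1) * ((s.card : ENNReal))⁻¹ := by ring
          _ = (s.card : ENNReal) * ((s.card : ENNReal))⁻¹ := by rw [hone]
          _ ≤ 1 := le_of_eq (ENNReal.mul_inv_cancel hcard0 hcardT)

lemma ENN_arith_bound {a e qe : ENNReal} (hq : qe ≤ a) (ha : a ≤ 1) (he : e ≤ 1) :
    (1 - a) + a * (1 - e) ≤ 1 - qe * e := by
  have hqeT : qe * e ≠ ⊤ := by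
    exact ENNReal.mul_ne_top (lt_of_le_of_lt (hq.trans ha) ENNReal.one_lt_top).ne
      (lt_of_le_of_lt he ENNReal.one_lt_top).ne
  refine le_tsub_of_add_le_right' hqeT ?_
  calc (1 - a) + a * (1 - e) + qe * e
      ≤ (1 - a) + a * (1 - e) + a * e := by
        exact add_le_add_right (mul_le_mul_left hq e) _
    _ = (1 - a) + a * ((1 - e) + e) := by ring
    _ = (1 - a) + a := by rw [tsub_add_cancel_of_le he, mul_one]
    _ = 1 := tsub_add_cancel_of_le ha

/-! ### The guessing cop strategy and the one-step contraction bound -/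

open Classical in
/-- The minimal catch level (`1` as junk value if none exists). -/
noncomputable def rhoC (G : SimpleGraph V) [DecidableRel G.Adj] (x y : V) : ℕ :=
  if h : ∃ k, CatchN G k x y then Nat.find h else 1

open Classical in
lemma rhoC_spec {G : SimpleGraph V} [DecidableRel G.Adj] {x y : V}
    (h : ∃ k, CatchN G k x y) : CatchN G (rhoC G x y) x y := by
  rw [rhoC, dif_pos h]
  exact Nat.find_spec h

open Classical in
lemma rhoC_le {G : SimpleGraph V} [DecidableRel G.Adj] {x y : V} {k : ℕ}
    (hk : CatchN G k x y) : rhoC G x y ≤ k := by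
  rw [rhoC, dif_pos ⟨k, hk⟩]
  exact Nat.find_le hk

open Classical in
lemma rhoC_pos {G : SimpleGraph V} [DecidableRel G.Adj] {x y : V} (hxy : x ≠ y) :
    0 < rhoC G x y := by
  rw [rhoC]
  split
  case isTrue h =>
    rcases Nat.eq_zero_or_pos (Nat.find h) with h0 | hp
    · exact absurd (CatchN_zero_iff.1 (h0 ▸ Nat.find_spec h)) hxy
    · exact hp
  case isFalse h => norm_num

open Classical in
/-- The cop's response assuming the robber will move to `w`. -/
noncomputable def copMove (G : SimpleGraph V) [DecidableRel G.Adj] (x y w : V) : V :=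
  if h : ∃ u ∈ nbhd G x, CatchN G (rhoC G x y - 1) u w then h.choose else x

open Classical in
lemma copMove_mem (G : SimpleGraph V) [DecidableRel G.Adj] (x y w : V) :
    copMove G x y w ∈ nbhd G x := by
  rw [copMove]
  split
  case isTrue h => exact h.choose_spec.1
  case isFalse h => exact CR_self_mem_nbhd G x

open Classical in
lemma copMove_catch {G : SimpleGraph V} [DecidableRel G.Adj] {x y w : V}
    (hex : ∃ k, CatchN G k x y) (hxy : x ≠ y) (hw : w ∈ nbhd G y) :
    CatchN G (rhoC G x y - 1) (copMove G x y w) w := by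
  have hm := rhoC_spec hex
  have hp : 0 < rhoC G x y := rhoC_pos hxy
  rw [← Nat.succ_pred_eq_of_pos hp] at hm
  rcases (CatchN_succ_iff).1 hm with he | hstep
  · exact absurd he hxy
  · obtain ⟨u, hu, hc⟩ := hstep w hw
    have hx : ∃ u ∈ nbhd G x, CatchN G (rhoC G x y - 1) u w := ⟨u, hu, hc⟩
    rw [copMove, dif_pos hx]
    exact hx.choose_spec.2

/-- The potential function: (an upper bound for) the conditional probability of remaining
free for `k` more rounds, as a function of the current position. -/
noncomputable def ddF (G : SimpleGraph V) [DecidableRel G.Adj] (q : ENNReal) (k : ℕ)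
    (p : V × V) : ENNReal :=
  if p.1 = p.2 then 0 else if rhoC G p.1 p.2 ≤ k then 1 - q ^ (rhoC G p.1 p.2) else 1

lemma ddF_le_one {G : SimpleGraph V} [DecidableRel G.Adj] {q : ENNReal} {k : ℕ}
    {p : V × V} : ddF G q k p ≤ 1 := by
  rw [ddF]
  split
  · exact zero_le_one
  · split
    · exact tsub_le_self
    · exact le_rfl

/-- The guessing cop strategy. -/
noncomputable def copStrat (G : SimpleGraph V) [DecidableRel G.Adj] (v0 : V) : Strat V :=
  fun h =>
    match h.getLast? with
    | none => PMF.pure v0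
    | some (x, y) =>
      if x = y then PMF.pure x
      else (PMF.uniformOfFinset (nbhd G y) (nbhd_nonempty G y)).map (copMove G x y)

/-- One-round transition kernel of the concurrent game. -/
noncomputable def ker1 (G : SimpleGraph V) [DecidableRel G.Adj] (πC πR : Strat V)
    (init : V × V) (h : List (V × V)) : PMF (List (V × V)) :=
  (πC h).bind fun u => (πR h).bind fun w =>
    PMF.pure (h ++ [step1 G (h.getLast?.getD init) u w])

lemma play1_succ (G : SimpleGraph V) [DecidableRel G.Adj] (πC πR : Strat V)
    (init : V × V) (t : ℕ) :
    play1 G πC πR init (t+1) = (play1 G πC πR init t).bind (ker1 G πC πR init) := rfl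

lemma play1_ne_nil (G : SimpleGraph V) [DecidableRel G.Adj] (πC πR : Strat V)
    (init : V × V) (t : ℕ) :
    ∀ h ∈ (play1 G πC πR init t).support, h ≠ [] := by
  induction t with
  | zero =>
    intro h hh
    rw [show play1 G πC πR init 0 = PMF.pure [init] from rfl, PMF.support_pure] at hh
    rw [hh]
    simp
  | succ t ih =>
    intro h hh
    rw [play1_succ, PMF.support_bind] at hh
    simp only [Set.mem_iUnion, ker1, PMF.support_bind, PMF.support_pure,
      Set.mem_singleton_iff, exists_prop] at hh
    obtain ⟨a, ha, u, hu, w, hw, rfl⟩ := hh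
    simp

lemma step1_eq {G : SimpleGraph V} [DecidableRel G.Adj] {x y u : V} (w w' : V)
    (hxy : x ≠ y) (hu : u ∈ nbhd G x) (hw' : (if w ∈ nbhd G y then w else y) = w') :
    step1 G (x, y) u w = if u = y ∧ w' = x then (u, u) else (u, w') := by
  rw [step1]
  simp only [hxy, if_false, hu, if_true, hw']

/-- The key one-step inequality. -/
lemma step_bound (G : SimpleGraph V) [DecidableRel G.Adj] (v0 : V) (init : V × V)
    (πR : Strat V) {q : ENNReal} (hq1 : q ≤ 1)
    (hq : ∀ z : V, q ≤ (((nbhd G z).card : ENNReal))⁻¹)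
    (hcatch : ∀ x y : V, ∃ k, CatchN G k x y)
    {h : List (V × V)} {x y : V} (hlast : h.getLast? = some (x, y)) (k : ℕ) :
    Ex (ker1 G (copStrat G v0) πR init h) (fun h' => ddF G q k (h'.getLast?.getD init)) ≤
      ddF G q (k+1) (x, y) := by
  have hp : h.getLast?.getD init = (x, y) := by rw [hlast]; rfl
  rw [ker1, hp]
  simp only [Ex_bind, Ex_pure, List.getLast?_concat, Option.getD_some]
  have hC : copStrat G v0 h =
      if x = y then PMF.pure x
      else (PMF.uniformOfFinset (nbhd G y) (nbhd_nonempty G y)).map (copMove G x y) := by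
    unfold copStrat
    rw [hlast]
  rw [hC]
  by_cases hxy : x = y
  · rw [if_pos hxy, Ex_pure]
    have hstep : ∀ w : V, step1 G (x, y) x w = (x, y) := fun w => by
      rw [step1]
      simp [hxy]
    simp only [hstep]
    have : ddF G q k ((x : V), (y : V)) = 0 := by simp [ddF, hxy]
    rw [this, Ex_const]
    exact zero_le
  · rw [if_neg hxy, Ex_map, Ex_swap]
    have hex := hcatch x y
    have hm1 : 0 < rhoC G x y := rhoC_pos hxy
    by_cases hmk : rhoC G x y ≤ k + 1
    · have hgoal : ddF G q (k+1) (x, y) = 1 - q ^ (rhoC G x y) := by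
        simp [ddF, hxy, hmk]
      rw [hgoal]
      set c : ENNReal := (((nbhd G y).card : ENNReal))⁻¹ with hc
      have hkey : ∀ w : V,
          Ex (PMF.uniformOfFinset (nbhd G y) (nbhd_nonempty G y))
            (fun wg => ddF G q k (step1 G (x, y) (copMove G x y wg) w)) ≤
          (1 - c) + c * (1 - q ^ (rhoC G x y - 1)) := by
        intro w
        have hw'mem : (if w ∈ nbhd G y then w else y) ∈ nbhd G y := by
          split
          · assumption
          · exact CR_self_mem_nbhd G y
        set w' : V := if w ∈ nbhd G y then w else y with hw'def
        refine Ex_uniform_le _ _ (fun a => ddF_le_one) hw'mem ?_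
        -- pointwise bound at the correct guess
        have humem : copMove G x y w' ∈ nbhd G x := copMove_mem G x y _
        have hcm : CatchN G (rhoC G x y - 1) (copMove G x y w') w' :=
          copMove_catch hex hxy hw'mem
        rw [step1_eq w w' hxy humem hw'def.symm]
        split
        · simp [ddF]
        · by_cases huw : copMove G x y w' = w'
          · simp [ddF, huw]
          · have hr : rhoC G (copMove G x y w') w' ≤ rhoC G x y - 1 := rhoC_le hcm
            have hrk : rhoC G (copMove G x y w') w' ≤ k := hr.trans (by omega)
            have hd : ddF G q k ((copMove G x y w'), w')
                = 1 - q ^ (rhoC G (copMove G x y w') w') := by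
              simp [ddF, huw, hrk]
            rw [hd]
            exact tsub_le_tsub_left (pow_le_pow_of_le_one (zero_le : (0:ENNReal) ≤ q) hq1 hr) 1
      calc Ex (πR h) (fun w => Ex (PMF.uniformOfFinset (nbhd G y) (nbhd_nonempty G y))
              (fun wg => ddF G q k (step1 G (x, y) (copMove G x y wg) w)))
          ≤ Ex (πR h) (fun _ => (1 - c) + c * (1 - q ^ (rhoC G x y - 1))) :=
            Ex_mono _ hkey
        _ = (1 - c) + c * (1 - q ^ (rhoC G x y - 1)) := Ex_const _ _
        _ ≤ 1 - q * q ^ (rhoC G x y - 1) := by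
            refine ENN_arith_bound (hq y) ?_ (pow_le_one' hq1 _)
            rw [hc]
            refine ENNReal.inv_le_one.2 ?_
            exact_mod_cast (nbhd_nonempty G y).card_pos
        _ = 1 - q ^ (rhoC G x y) := by
            rw [← pow_succ', Nat.sub_add_cancel hm1]
    · have hgoal : ddF G q (k+1) (x, y) = 1 := by simp [ddF, hxy, hmk]
      rw [hgoal]
      exact Ex_le _ (fun w => Ex_le _ (fun wg => ddF_le_one))

/-! ### Iterated contraction and the geometric bound -/

lemma KK_bound (G : SimpleGraph V) [DecidableRel G.Adj] (v0 : V) (init : V × V)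
    (πR : Strat V) {q : ENNReal} (hq1 : q ≤ 1)
    (hq : ∀ z : V, q ≤ (((nbhd G z).card : ENNReal))⁻¹)
    (hcatch : ∀ x y : V, ∃ k, CatchN G k x y) (k t : ℕ) :
    Ex (play1 G (copStrat G v0) πR init (t + k))
        (fun h => ddF G q 0 (h.getLast?.getD init)) ≤
      Ex (play1 G (copStrat G v0) πR init t)
        (fun h => ddF G q k (h.getLast?.getD init)) := by
  induction k generalizing t with
  | zero => exact le_of_eq rfl
  | succ k ih =>
    have h1 : t + (k+1) = (t+1) + k := by omega
    rw [h1]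
    refine (ih (t+1)).trans ?_
    rw [play1_succ, Ex_bind]
    refine Ex_mono_support _ (fun h hh => ?_)
    have hne : h ≠ [] :=
      play1_ne_nil G (copStrat G v0) πR init t h ((PMF.mem_support_iff _ _).2 hh)
    obtain ⟨p, hp⟩ : ∃ p, h.getLast? = some p := by
      cases e : h.getLast? with
      | none => exact absurd (List.getLast?_eq_none_iff.1 e) hne
      | some p => exact ⟨p, rfl⟩
    obtain ⟨x, y⟩ := p
    have hb := step_bound G v0 init πR hq1 hq hcatch hp k
    have hgd : h.getLast?.getD init = (x, y) := by rw [hp]; rfl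
    rw [hgd]
    exact hb

lemma freeProb_eq (G : SimpleGraph V) [DecidableRel G.Adj] (πC πR : Strat V)
    (init : V × V) (q : ENNReal) (t : ℕ) :
    freeProb1 G πC πR init t =
      Ex (play1 G πC πR init t) (fun h => ddF G q 0 (h.getLast?.getD init)) := by
  rw [freeProb1, PMF.toOuterMeasure_apply, Ex]
  refine tsum_congr fun h => ?_
  by_cases hm : (h.getLast?.getD init).1 ≠ (h.getLast?.getD init).2
  · have hmem : h ∈ {h : List (V × V) |
        (h.getLast?.getD init).1 ≠ (h.getLast?.getD init).2} := hm
    rw [Set.indicator_of_mem hmem]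
    have hdd : ddF G q 0 (h.getLast?.getD init) = 1 := by
      have hpos := rhoC_pos (G := G) hm
      simp [ddF, hm, hpos.ne']
    rw [hdd, mul_one]
  · have hnm : h ∉ {h : List (V × V) |
        (h.getLast?.getD init).1 ≠ (h.getLast?.getD init).2} := hm
    rw [Set.indicator_of_notMem hnm]
    push_neg at hm
    have hdd : ddF G q 0 (h.getLast?.getD init) = 0 := by simp [ddF, hm]
    rw [hdd, mul_zero]

lemma ddF_le_ddF_zero {G : SimpleGraph V} [DecidableRel G.Adj] {q : ENNReal} {k : ℕ}
    {p : V × V} : ddF G q k p ≤ ddF G q 0 p := by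
  by_cases hp : p.1 = p.2
  · simp [ddF, hp]
  · have hpos := rhoC_pos (G := G) hp
    have h0 : ddF G q 0 p = 1 := by simp [ddF, hp, hpos.ne']
    rw [h0]
    exact ddF_le_one

lemma freeProb_mono_add (G : SimpleGraph V) [DecidableRel G.Adj] (v0 : V) (init : V × V)
    (πR : Strat V) {q : ENNReal} (hq1 : q ≤ 1)
    (hq : ∀ z : V, q ≤ (((nbhd G z).card : ENNReal))⁻¹)
    (hcatch : ∀ x y : V, ∃ k, CatchN G k x y) (r t : ℕ) :
    freeProb1 G (copStrat G v0) πR init (t + r) ≤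
      freeProb1 G (copStrat G v0) πR init t := by
  rw [freeProb_eq G _ πR init q, freeProb_eq G _ πR init q]
  exact (KK_bound G v0 init πR hq1 hq hcatch r t).trans
    (Ex_mono _ fun h => ddF_le_ddF_zero)

lemma freeProb_decay (G : SimpleGraph V) [DecidableRel G.Adj] (v0 : V) (init : V × V)
    (πR : Strat V) {q : ENNReal} (hq1 : q ≤ 1)
    (hq : ∀ z : V, q ≤ (((nbhd G z).card : ENNReal))⁻¹)
    {T : ℕ} (hcatchT : ∀ x y : V, CatchN G T x y) (t : ℕ) :
    freeProb1 G (copStrat G v0) πR init (t + T) ≤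
      (1 - q ^ T) * freeProb1 G (copStrat G v0) πR init t := by
  have hcatch : ∀ x y : V, ∃ k, CatchN G k x y := fun x y => ⟨T, hcatchT x y⟩
  rw [freeProb_eq G _ πR init q, freeProb_eq G _ πR init q]
  refine (KK_bound G v0 init πR hq1 hq hcatch T t).trans ?_
  have hpt : ∀ h : List (V × V), ddF G q T (h.getLast?.getD init) ≤
      (1 - q ^ T) * ddF G q 0 (h.getLast?.getD init) := by
    intro h
    set p := h.getLast?.getD init with hpd
    by_cases hp : p.1 = p.2
    · simp [ddF, hp]
    · have hrT : rhoC G p.1 p.2 ≤ T := rhoC_le (hcatchT _ _)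
      have hT1 : ddF G q T p = 1 - q ^ (rhoC G p.1 p.2) := by simp [ddF, hp, hrT]
      have h01 : ddF G q 0 p = 1 := by
        have hpos := rhoC_pos (G := G) hp
        simp [ddF, hp, hpos.ne']
      rw [hT1, h01, mul_one]
      exact tsub_le_tsub_left (pow_le_pow_of_le_one (zero_le : (0:ENNReal) ≤ q) hq1 hrT) 1
  exact (Ex_mono _ hpt).trans_eq (Ex_mul_left _ _ _)

lemma freeProb_le_one (G : SimpleGraph V) [DecidableRel G.Adj] (πC πR : Strat V)
    (init : V × V) (t : ℕ) : freeProb1 G πC πR init t ≤ 1 := by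
  rw [freeProb_eq G πC πR init 0]
  exact Ex_le _ (fun h => ddF_le_one)

lemma freeProb_geom (G : SimpleGraph V) [DecidableRel G.Adj] (v0 : V) (init : V × V)
    (πR : Strat V) {q : ENNReal} (hq1 : q ≤ 1)
    (hq : ∀ z : V, q ≤ (((nbhd G z).card : ENNReal))⁻¹)
    {T : ℕ} (hcatchT : ∀ x y : V, CatchN G T x y) (k r : ℕ) :
    freeProb1 G (copStrat G v0) πR init (k * T + r) ≤ (1 - q ^ T) ^ k := by
  have hcatch : ∀ x y : V, ∃ k, CatchN G k x y := fun x y => ⟨T, hcatchT x y⟩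
  induction k with
  | zero =>
    have h0 : 0 * T + r = 0 + r := by omega
    rw [h0, pow_zero]
    exact (freeProb_mono_add G v0 init πR hq1 hq hcatch r 0).trans
      (freeProb_le_one G _ πR init 0)
  | succ k ih =>
    have h1 : (k+1) * T + r = (k * T + r) + T := by ring
    rw [h1]
    refine (freeProb_decay G v0 init πR hq1 hq hcatchT _).trans ?_
    rw [pow_succ]
    calc (1 - q ^ T) * freeProb1 G (copStrat G v0) πR init (k * T + r)
        ≤ (1 - q ^ T) * (1 - q ^ T) ^ k := mul_le_mul_right ih _
      _ = (1 - q ^ T) ^ k * (1 - q ^ T) := mul_comm _ _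

/-- if the cop number of `G` is `1`, then the value of the single-cop
concurrent game is finite from every initial position. -/
theorem gameValue_lt_top_of_copNumber_eq_one (G : SimpleGraph V) [DecidableRel G.Adj]
    (hconn : G.Connected) (h : copNumber G = 1) :
    ∀ init : V × V,
      (⨅ πC : Strat V, ⨆ πR : Strat V, payoff G πC πR init) < ⊤ := by
  intro init
  obtain ⟨T, hTpos, hcatchT⟩ := exists_catch_bound G hconn h
  haveI : Nonempty V := ⟨init.1⟩
  haveI : NeZero T := ⟨hTpos.ne'⟩
  set q : ENNReal := ((Fintype.card V : ENNReal))⁻¹ with hqdef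
  have hq1 : q ≤ 1 := by
    rw [hqdef]
    refine ENNReal.inv_le_one.2 ?_
    exact_mod_cast Fintype.card_pos
  have hq : ∀ z : V, q ≤ (((nbhd G z).card : ENNReal))⁻¹ := fun z => by
    rw [hqdef]
    refine ENNReal.inv_le_inv.2 ?_
    exact_mod_cast (Finset.card_le_univ (nbhd G z)).trans_eq Finset.card_univ
  have hcatch : ∀ x y : V, ∃ k, CatchN G k x y := fun x y => ⟨T, hcatchT x y⟩
  have hεpos : q ^ T ≠ 0 := by
    rw [hqdef]
    exact pow_ne_zero T (ENNReal.inv_ne_zero.2 (ENNReal.natCast_ne_top _))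
  have hbound : ∀ πR : Strat V,
      payoff G (copStrat G init.1) πR init ≤ (T : ENNReal) * (q ^ T)⁻¹ := by
    intro πR
    rw [payoff]
    have hre : ∑' t : ℕ, freeProb1 G (copStrat G init.1) πR init t
        = ∑' p : ℕ × Fin T, freeProb1 G (copStrat G init.1) πR init (p.1 * T + p.2) := by
      rw [← Equiv.tsum_eq (Nat.divModEquiv T).symm
        (fun t => freeProb1 G (copStrat G init.1) πR init t)]
      exact tsum_congr fun p => by cases p; rfl
    rw [hre, ENNReal.tsum_prod
      (f := fun (k : ℕ) (r : Fin T) => freeProb1 G (copStrat G init.1) πR init (k * T + r))]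
    calc ∑' (k : ℕ) (r : Fin T), freeProb1 G (copStrat G init.1) πR init (k * T + r)
        ≤ ∑' (k : ℕ) (_r : Fin T), (1 - q ^ T) ^ k :=
          Summable.tsum_le_tsum (fun k => Summable.tsum_le_tsum
              (fun r => freeProb_geom G init.1 init πR hq1 hq hcatchT k r)
              ENNReal.summable ENNReal.summable)
            ENNReal.summable ENNReal.summable
      _ = ∑' (k : ℕ), (T : ENNReal) * (1 - q ^ T) ^ k := by
          refine tsum_congr fun k => ?_
          rw [tsum_fintype, Finset.sum_const, Finset.card_univ, Fintype.card_fin,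
            nsmul_eq_mul]
      _ = (T : ENNReal) * ∑' (k : ℕ), (1 - q ^ T) ^ k := ENNReal.tsum_mul_left
      _ = (T : ENNReal) * (q ^ T)⁻¹ := by
          rw [ENNReal.tsum_geometric,
            ENNReal.sub_sub_cancel ENNReal.one_ne_top (pow_le_one' hq1 T)]
  have hfin : (T : ENNReal) * (q ^ T)⁻¹ < ⊤ := by
    refine ENNReal.mul_lt_top (ENNReal.natCast_lt_top T) ?_
    exact ENNReal.inv_lt_top.2 (zero_lt_iff.mpr hεpos)
  refine lt_of_le_of_lt ?_ hfin
  exact (iInf_le _ (copStrat G init.1)).trans (iSup_le hbound)
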